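/- Let c > 0 and let ξ̄ ≥ 0 be such that cosh(ξ) ≤ 2·sinh(ξ) for all ξ ≥ ξ̄. Then the integral over [ξ̄,∞) of cosh(ξ)·sinh(ξ)·exp(−c·g(ξ)) dξ is at most (2/c)·exp(−c·g(ξ̄)), where g(ξ) = sinh(2ξ)/4 − ξ/2. -/

import Mathlib

open MeasureTheory Real

/-- The function `g(ξ) = sinh(2ξ)/4 − ξ/2`, with `g'(ξ) = sinh²(ξ)`. -/
noncomputable def swerveG (ξ : ℝ) : ℝ := Real.sinh (2 * ξ) / 4 - ξ / 2

lemma hasDerivAt_swerveG (ξ : ℝ) : HasDerivAt swerveG (Real.sinh ξ ^ 2) ξ := by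
  have h1 : HasDerivAt (fun x : ℝ => Real.sinh (2 * x)) (Real.cosh (2 * ξ) * 2) ξ :=
    by simpa [Function.comp_def] using (Real.hasDerivAt_sinh (2 * ξ)).comp ξ ((hasDerivAt_id ξ).const_mul 2)
  have h2 := (h1.div_const 4).sub ((hasDerivAt_id ξ).div_const 2)
  refine h2.congr_deriv ?_
  rw [Real.cosh_two_mul, Real.cosh_sq]
  ring

lemma swerveG_tendsto : Filter.Tendsto swerveG Filter.atTop Filter.atTop := by
  apply Filter.tendsto_atTop_mono' _ _ (Filter.tendsto_id.atTop_div_const (by norm_num : (0:ℝ) < 2))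
  filter_upwards [Filter.eventually_ge_atTop (9:ℝ)] with ξ hξ
  have h1 : ξ + 1 ≤ Real.exp ξ := Real.add_one_le_exp ξ
  have h2 : Real.exp (2 * ξ) = Real.exp ξ * Real.exp ξ := by
    rw [← Real.exp_add]; ring_nf
  have h3 : Real.sinh (2 * ξ) = (Real.exp (2 * ξ) - Real.exp (-(2 * ξ))) / 2 :=
    Real.sinh_eq _
  have h4 : Real.exp (-(2 * ξ)) ≤ 1 := by
    rw [Real.exp_le_one_iff]; nlinarith
  simp only [swerveG, id]
  nlinarith [Real.exp_pos ξ]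

/-- Tail estimate: if `c > 0` and `ξ̄ ≥ 0` is such that `cosh ξ ≤ 2·sinh ξ` for all `ξ ≥ ξ̄`,
then `∫_{ξ̄}^∞ cosh(ξ)·sinh(ξ)·exp(−c·g(ξ)) dξ ≤ (2/c)·exp(−c·g(ξ̄))`. -/
theorem integral_cosh_sinh_exp_neg_tail_le (c ξbar : ℝ) (hc : 0 < c) (hξbar : 0 ≤ ξbar)
    (h : ∀ ξ : ℝ, ξbar ≤ ξ → Real.cosh ξ ≤ 2 * Real.sinh ξ) :
    (∫ ξ in Set.Ioi ξbar, Real.cosh ξ * Real.sinh ξ * Real.exp (-(c * swerveG ξ)))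
      ≤ (2 / c) * Real.exp (-(c * swerveG ξbar)) := by
  set F : ℝ → ℝ := fun ξ => -(Real.exp (-(c * swerveG ξ)) / c) with hF
  set f' : ℝ → ℝ := fun ξ => Real.sinh ξ ^ 2 * Real.exp (-(c * swerveG ξ)) with hf'
  have hderiv : ∀ ξ : ℝ, ξ ∈ Set.Ici ξbar → HasDerivAt F (f' ξ) ξ := by
    intro ξ _
    have h1 : HasDerivAt (fun x : ℝ => -(c * swerveG x)) (-(c * Real.sinh ξ ^ 2)) ξ :=
      (((hasDerivAt_swerveG ξ).const_mul c).neg)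
    have h2 := ((h1.exp).div_const c).neg
    refine h2.congr_deriv ?_
    field_simp [hf']
    ring
  have htendF : Filter.Tendsto F Filter.atTop (nhds 0) := by
    have h1 : Filter.Tendsto (fun ξ => -(c * swerveG ξ)) Filter.atTop Filter.atBot := by
      apply Filter.tendsto_neg_atBot_iff.mpr
      exact (swerveG_tendsto.const_mul_atTop hc)
    have h2 : Filter.Tendsto (fun ξ => Real.exp (-(c * swerveG ξ))) Filter.atTop (nhds 0) :=
      Real.tendsto_exp_atBot.comp h1
    have := (h2.div_const c).neg
    simpa using this
  have hkey : ∫ ξ in Set.Ioi ξbar, f' ξ = 0 - F ξbar := by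
    apply integral_Ioi_of_hasDerivAt_of_nonneg' hderiv _ htendF
    intro ξ _
    positivity
  have hint : IntegrableOn f' (Set.Ioi ξbar) :=
    integrableOn_Ioi_deriv_of_nonneg' hderiv (fun ξ _ => by positivity) htendF
  have hle : (∫ ξ in Set.Ioi ξbar, Real.cosh ξ * Real.sinh ξ * Real.exp (-(c * swerveG ξ)))
      ≤ ∫ ξ in Set.Ioi ξbar, 2 * f' ξ := by
    apply setIntegral_mono_on ?_ (hint.const_mul 2) measurableSet_Ioi
    · intro ξ hξ
      have hξ' : ξbar ≤ ξ := le_of_lt hξ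
      have hs : 0 ≤ Real.sinh ξ := Real.sinh_nonneg_iff.mpr (hξbar.trans hξ')
      have := h ξ hξ'
      simp only [hf']
      nlinarith [Real.exp_pos (-(c * swerveG ξ)), mul_le_mul_of_nonneg_right this hs]
    · -- integrability of the original integrand
      apply (hint.const_mul 2).mono' ?_ ?_
      · exact ((Real.continuous_cosh.mul Real.continuous_sinh).mul
          (Real.continuous_exp.comp (continuous_const.mul
            ((Real.continuous_sinh.comp (continuous_const.mul continuous_id)).div_const 4 |>.sub
              (continuous_id.div_const 2))).neg)).aestronglyMeasurable
      · filter_upwards [ae_restrict_mem measurableSet_Ioi] with ξ hξ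
        have hξ' : ξbar ≤ ξ := le_of_lt hξ
        have hs : 0 ≤ Real.sinh ξ := Real.sinh_nonneg_iff.mpr (hξbar.trans hξ')
        have hcs := h ξ hξ'
        have he : (0:ℝ) < Real.exp (-(c * swerveG ξ)) := Real.exp_pos _
        rw [Real.norm_eq_abs, abs_of_nonneg (by positivity : (0:ℝ) ≤
          Real.cosh ξ * Real.sinh ξ * Real.exp (-(c * swerveG ξ)))]
        simp only [hf']
        nlinarith [mul_le_mul_of_nonneg_right hcs hs]
  calc (∫ ξ in Set.Ioi ξbar, Real.cosh ξ * Real.sinh ξ * Real.exp (-(c * swerveG ξ)))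
      ≤ ∫ ξ in Set.Ioi ξbar, 2 * f' ξ := hle
    _ = 2 * (0 - F ξbar) := by rw [integral_const_mul, hkey]
    _ = (2 / c) * Real.exp (-(c * swerveG ξbar)) := by
        simp only [hF]; field_simp; ring
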